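/- arXiv:1306.4006 — 4 statements merged into one kernel-verified Lean document; each statement's English description precedes it below -/
import Mathlib

section
/- Let F be a field and L a 3-dimensional Lie algebra over F that is perfect, i.e. [L, L] = L. Then L is a simple Lie algebra. -/
open Module LieAlgebra

lemma aux (F : Type*) [Field F] (Q : Type*) [LieRing Q] [LieAlgebra F Q]
    [FiniteDimensional F Q] (h1 : 1 ≤ finrank F Q) (h2 : finrank F Q ≤ 2)
    (hp : derivedSeries F Q 1 = ⊤) : False := by
  have hspan : ((derivedSeries F Q 1 : LieIdeal F Q) : Submodule F Q) =
      Submodule.span F { m | ∃ x ∈ (⊤ : LieIdeal F Q), ∃ n ∈ (⊤ : LieIdeal F Q), ⁅x, n⁆ = m } := by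
    rw [derivedSeries_def, derivedSeriesOfIdeal_succ, derivedSeriesOfIdeal_zero]
    exact LieSubmodule.lieIdeal_oper_eq_linear_span' ..
  interval_cases h : finrank F Q
  · -- finrank = 1
    set b := (finBasis F Q).reindex (finCongr h) with hb
    have key : ∀ x y : Q, ⁅x, y⁆ = 0 := by
      intro x y
      have hx := b.sum_repr x
      have hy := b.sum_repr y
      rw [← hx, ← hy]
      simp [Fin.sum_univ_one]
    have : ((derivedSeries F Q 1 : LieIdeal F Q) : Submodule F Q) ≤ ⊥ := by
      rw [hspan, Submodule.span_le]
      rintro m ⟨x, -, n, -, rfl⟩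
      simp [key]
    rw [hp] at this
    have h0 : finrank F Q = 0 := by
      have : (⊤ : Submodule F Q) = ⊥ := le_antisymm (by simpa using this) bot_le
      rw [← finrank_top F Q, this, finrank_bot]
    omega
  · -- finrank = 2
    set b := (finBasis F Q).reindex (finCongr h) with hb
    set z := ⁅b 0, b 1⁆ with hz
    have key : ∀ x y : Q, ⁅x, y⁆ ∈ Submodule.span F {z} := by
      intro x y
      have hx := b.sum_repr x
      have hy := b.sum_repr y
      rw [← hx, ← hy]
      simp only [Fin.sum_univ_two, add_lie, lie_add, smul_lie, lie_smul, lie_self, smul_zero,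
        add_zero, zero_add]
      have h10 : ⁅b 1, b 0⁆ = -z := by rw [hz, ← lie_skew]
      rw [h10]
      refine Submodule.add_mem _ ?_ ?_ <;>
        refine Submodule.smul_mem _ _ (Submodule.smul_mem _ _ ?_)
      · exact Submodule.neg_mem _ (Submodule.mem_span_singleton_self z)
      · exact Submodule.mem_span_singleton_self z
    have hle : ((derivedSeries F Q 1 : LieIdeal F Q) : Submodule F Q) ≤ Submodule.span F {z} := by
      rw [hspan, Submodule.span_le]
      rintro m ⟨x, -, n, -, rfl⟩
      exact key x n
    rw [hp] at hle
    have : finrank F Q ≤ finrank F (Submodule.span F {z}) := by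
      calc finrank F Q = finrank F (⊤ : Submodule F Q) := (finrank_top F Q).symm
      _ ≤ finrank F (Submodule.span F {z}) := Submodule.finrank_mono (by simpa using hle)
    have : finrank F (Submodule.span F ({z} : Set Q)) ≤ 1 := by
      simpa using finrank_span_le_card ({z} : Set Q)
    omega

/-- The quotient map as a Lie algebra morphism. -/
def qmk {F : Type*} [Field F] {L : Type*} [LieRing L] [LieAlgebra F L] (I : LieIdeal F L) :
    L →ₗ⁅F⁆ L ⧸ I :=
  { (LieSubmodule.Quotient.mk' I : L →ₗ[F] L ⧸ I) with
    map_lie' := fun {_ _} => rfl }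

theorem stmt6 (F : Type*) [Field F] (L : Type*) [LieRing L] [LieAlgebra F L]
    [FiniteDimensional F L] (hdim : Module.finrank F L = 3)
    (hperf : LieAlgebra.derivedSeries F L 1 = ⊤) :
    LieAlgebra.IsSimple F L := by
  constructor
  · intro I
    rcases eq_or_ne I ⊥ with hI | hbot
    · exact Or.inl hI
    rcases eq_or_ne I ⊤ with hI | htop
    · exact Or.inr hI
    exfalso
    have hsurj : Function.Surjective (qmk I) := LieSubmodule.Quotient.surjective_mk' I
    have hq : derivedSeries F (L ⧸ I) 1 = ⊤ := by
      rw [← LieIdeal.derivedSeries_map_eq 1 hsurj, hperf,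
        show (⊤ : LieIdeal F L) = derivedSeries F L 0 from rfl,
        LieIdeal.derivedSeries_map_eq 0 hsurj]
      rfl
    have hpos : 0 < finrank F (I : Submodule F L) := by
      rw [Module.finrank_pos_iff]
      rcases (LieSubmodule.nontrivial_iff_ne_bot (N := I)).mpr hbot with ⟨⟨x,hx⟩,⟨y,hy⟩,hxy⟩
      exact ⟨⟨x,hx⟩,⟨y,hy⟩, by simpa using hxy⟩
    have hlt : finrank F (I : Submodule F L) < 3 := by
      rw [← hdim]
      refine Submodule.finrank_lt ?_
      intro h
      exact htop (by rwa [← LieSubmodule.toSubmodule_inj, LieSubmodule.top_toSubmodule])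
    have hqd : finrank F (L ⧸ I) + finrank F (I : Submodule F L) = 3 := by
      rw [← hdim]
      exact Submodule.finrank_quotient_add_finrank _
    exact aux F (L ⧸ I) (by omega) (by omega) hq
  · intro habel
    have : derivedSeries F L 1 = ⊥ := by
      rw [derivedSeries_def, derivedSeriesOfIdeal_succ, derivedSeriesOfIdeal_zero]
      exact LieSubmodule.trivial_lie_oper_zero _ _
    rw [hperf] at this
    have h0 : finrank F L = 0 := by
      have : (⊤ : Submodule F L) = ⊥ := by
        rw [← LieSubmodule.top_toSubmodule (R := F) (L := L) (M := L), this]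
        rfl
      rw [← finrank_top F L, this, finrank_bot]
    omega
end

section
/- Let F ⊆ K be a field extension and let L be a perfect 3-dimensional Lie algebra over F. Then the base change K ⊗_F L is a 3-dimensional perfect Lie algebra over K, and hence a simple Lie algebra over K. -/
open scoped TensorProduct

open Module LieAlgebra

section Aux

variable {k M : Type*} [Field k] [LieRing M] [LieAlgebra k M]

/-- If `M` is spanned by two elements `a, b`, then the derived ideal is contained in
the span of `⁅a, b⁆`. -/
lemma aux_derived_le_span (a b : M) (h : Submodule.span k ({a, b} : Set M) = ⊤) :
    ∀ x ∈ LieAlgebra.derivedSeries k M 1, x ∈ Submodule.span k ({⁅a, b⁆} : Set M) := by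
  intro x hx
  have hd : LieAlgebra.derivedSeries k M 1
      = ⁅(⊤ : LieIdeal k M), (⊤ : LieSubmodule k M M)⁆ := by
    simp [LieAlgebra.derivedSeries_def, LieAlgebra.derivedSeriesOfIdeal_succ,
      LieAlgebra.derivedSeriesOfIdeal_zero]
  rw [hd] at hx
  have hx' : x ∈ Submodule.span k
      {m | ∃ y ∈ (⊤ : LieIdeal k M), ∃ n ∈ (⊤ : LieSubmodule k M M), ⁅y, n⁆ = m} := by
    rw [← LieSubmodule.lieIdeal_oper_eq_linear_span']
    exact hx
  refine Submodule.span_le.mpr ?_ hx'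
  rintro z ⟨u, -, v, -, rfl⟩
  have hu : u ∈ Submodule.span k ({a, b} : Set M) := h ▸ Submodule.mem_top
  have hv : v ∈ Submodule.span k ({a, b} : Set M) := h ▸ Submodule.mem_top
  obtain ⟨c, d, rfl⟩ := Submodule.mem_span_pair.mp hu
  obtain ⟨e, f, rfl⟩ := Submodule.mem_span_pair.mp hv
  refine Submodule.mem_span_singleton.mpr ⟨c * f - d * e, ?_⟩
  simp only [lie_add, add_lie, lie_smul, smul_lie, lie_self, smul_zero, add_zero, zero_add,
    sub_smul, smul_smul, ← lie_skew b a, smul_neg]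
  module

lemma aux_exists_span (n : ℕ) [FiniteDimensional k M] (h : finrank k M ≤ n) :
    ∃ f : Fin n → M, Submodule.span k (Set.range f) = ⊤ := by
  let B := Module.finBasis k M
  refine ⟨fun i => if hi : (i : ℕ) < finrank k M then B ⟨i, hi⟩ else 0, ?_⟩
  rw [eq_top_iff, ← B.span_eq]
  apply Submodule.span_mono
  rintro x ⟨j, rfl⟩
  exact ⟨⟨(j : ℕ), lt_of_lt_of_le j.2 h⟩, by simp [j.2]⟩

/-- A perfect Lie algebra of dimension ≤ 2 over a field is trivial. -/
lemma aux_not_perfect_of_dim_le_two [FiniteDimensional k M]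
    (h2 : finrank k M ≤ 2) (hp : LieAlgebra.derivedSeries k M 1 = ⊤) :
    Subsingleton M := by
  obtain ⟨f, hf⟩ := aux_exists_span 2 h2
  have hrange : Set.range f = {f 0, f 1} := by
    ext x
    constructor
    · rintro ⟨i, rfl⟩; fin_cases i <;> simp
    · rintro (rfl | rfl) <;> [exact ⟨0, rfl⟩; exact ⟨1, rfl⟩]
  rw [hrange] at hf
  have h1 : finrank k M ≤ 1 := by
    have hle := aux_derived_le_span (k := k) (f 0) (f 1) hf
    rw [hp] at hle
    have hmle : (⊤ : Submodule k M) ≤ Submodule.span k ({⁅f 0, f 1⁆} : Set M) :=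
      fun x _ => hle x trivial
    calc finrank k M = finrank k (⊤ : Submodule k M) := (finrank_top k M).symm
      _ ≤ finrank k (Submodule.span k ({⁅f 0, f 1⁆} : Set M)) := Submodule.finrank_mono hmle
      _ ≤ 1 := by simpa using finrank_span_le_card (R := k) ({⁅f 0, f 1⁆} : Set M)
  obtain ⟨g, hg⟩ := aux_exists_span 1 h1
  have hg' : Submodule.span k ({g 0, (0 : M)} : Set M) = ⊤ := by
    rw [eq_top_iff, ← hg]
    apply Submodule.span_mono
    rintro x ⟨i, rfl⟩
    have : i = 0 := Subsingleton.elim _ _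
    simp [this]
  have hle := aux_derived_le_span (k := k) (g 0) 0 hg'
  rw [hp] at hle
  have hz : ∀ x : M, x = 0 := by
    intro x
    have hx := hle x trivial
    rw [lie_zero] at hx
    simpa using hx
  exact ⟨fun x y => by rw [hz x, hz y]⟩

/-- The quotient map by a Lie ideal, as a Lie algebra morphism. -/
def auxQuotMk (I : LieIdeal k M) : M →ₗ⁅k⁆ M ⧸ I :=
  { I.toSubmodule.mkQ with
    map_lie' := fun {_ _} => rfl }

lemma auxQuotMk_surjective (I : LieIdeal k M) : Function.Surjective (auxQuotMk I) :=
  Submodule.Quotient.mk_surjective _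

/-- A perfect 3-dimensional Lie algebra over a field is simple. -/
lemma aux_simple [FiniteDimensional k M] (h3 : finrank k M = 3)
    (hp : LieAlgebra.derivedSeries k M 1 = ⊤) : LieAlgebra.IsSimple k M := by
  have hnt : Nontrivial M := by
    apply Module.nontrivial_of_finrank_pos (R := k); omega
  constructor
  · intro I
    by_contra hI
    push_neg at hI
    obtain ⟨hbot, htop⟩ := hI
    have hIne : I.toSubmodule ≠ ⊥ := by
      intro h; exact hbot ((LieSubmodule.toSubmodule_eq_bot I).mp h)
    have hIpos : 0 < finrank k I.toSubmodule := by
      rcases Nat.eq_zero_or_pos (finrank k I.toSubmodule) with h | h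
      · exact absurd (Submodule.finrank_eq_zero.mp h) hIne
      · exact h
    have hQI : finrank k (M ⧸ I) + finrank k I.toSubmodule = finrank k M :=
      Submodule.finrank_quotient_add_finrank I.toSubmodule
    have hQpos : 0 < finrank k (M ⧸ I) := by
      rcases Nat.eq_zero_or_pos (finrank k (M ⧸ I)) with h | h
      · refine absurd ?_ htop
        apply (LieSubmodule.toSubmodule_eq_top I).mp
        apply Submodule.eq_top_of_finrank_eq
        omega
      · exact h
    have hQle : finrank k (M ⧸ I) ≤ 2 := by omega
    have hsurj := auxQuotMk_surjective I
    have hmap := LieIdeal.derivedSeries_map_eq (f := auxQuotMk I) 1 hsurj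
    rw [hp] at hmap
    have hQperf : LieAlgebra.derivedSeries k (M ⧸ I) 1 = ⊤ := by
      rw [← hmap, ← (auxQuotMk I).idealRange_eq_map,
        (auxQuotMk I).idealRange_eq_top_of_surjective hsurj]
    have hQfd : FiniteDimensional k (M ⧸ I) :=
      inferInstanceAs (FiniteDimensional k (M ⧸ I.toSubmodule))
    have hQnt : Nontrivial (M ⧸ I) := Module.nontrivial_of_finrank_pos (R := k) hQpos
    have := aux_not_perfect_of_dim_le_two (k := k) (M := M ⧸ I) hQle hQperf
    exact not_subsingleton_iff_nontrivial.mpr hQnt this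
  · intro habel
    have : LieAlgebra.IsSolvable M := LieAlgebra.ofAbelianIsSolvable M
    have hlt := LieAlgebra.derivedSeries_lt_top_of_solvable (R := k) (L := M)
    rw [hp] at hlt
    exact lt_irrefl _ hlt

end Aux

theorem stmt7 (F K : Type*) [Field F] [Field K] [Algebra F K]
    (L : Type*) [LieRing L] [LieAlgebra F L]
    [FiniteDimensional F L] (hdim : Module.finrank F L = 3)
    (hperf : LieAlgebra.derivedSeries F L 1 = ⊤) :
    Module.finrank K (K ⊗[F] L) = 3 ∧
    LieAlgebra.derivedSeries K (K ⊗[F] L) 1 = ⊤ ∧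
    LieAlgebra.IsSimple K (K ⊗[F] L) := by
  have hfin : Module.finrank K (K ⊗[F] L) = 3 := by
    rw [Module.finrank_baseChange, hdim]
  have hfd : FiniteDimensional K (K ⊗[F] L) := inferInstance
  have hp : LieAlgebra.derivedSeries K (K ⊗[F] L) 1 = ⊤ := by
    have h1 : LieAlgebra.derivedSeries K (K ⊗[F] L) 1
        = ⁅(⊤ : LieIdeal K (K ⊗[F] L)), (⊤ : LieSubmodule K (K ⊗[F] L) (K ⊗[F] L))⁆ := by
      simp [LieAlgebra.derivedSeries_def, LieAlgebra.derivedSeriesOfIdeal_succ,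
        LieAlgebra.derivedSeriesOfIdeal_zero]
    have h2 : LieAlgebra.derivedSeries F L 1
        = ⁅(⊤ : LieIdeal F L), (⊤ : LieSubmodule F L L)⁆ := by
      simp [LieAlgebra.derivedSeries_def, LieAlgebra.derivedSeriesOfIdeal_succ,
        LieAlgebra.derivedSeriesOfIdeal_zero]
    rw [h1, ← LieSubmodule.baseChange_top (R := F) (A := K) (L := L) (M := L),
      ← LieSubmodule.lie_baseChange, ← h2, hperf,
      LieSubmodule.baseChange_top]
  exact ⟨hfin, hp, aux_simple hfin hp⟩
end

section
/- Let F be a field, V a 4-dimensional F-vector space, and f a non-degenerate symmetric bilinear form on V; if char F = 2 assume further that f is not alternating. Let L(f) be the Lie algebra of endomorphisms of V skew-adjoint with respect to f. Then the derived subalgebra [L(f), L(f)] equals L(f) if and only if char F ≠ 2. -/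
section Helpers

variable {F : Type*} [Field F] {V : Type*} [AddCommGroup V] [Module F V]

/-- The skew-adjoint endomorphism `v ↦ f a v • b - f b v • a`. -/
def Msk (f : LinearMap.BilinForm F V) (a b : V) : Module.End F V :=
  (LinearMap.toSpanSingleton F V b).comp (f a) - (LinearMap.toSpanSingleton F V a).comp (f b)

lemma Msk_apply (f : LinearMap.BilinForm F V) (a b v : V) :
    Msk f a b v = f a v • b - f b v • a := rfl

lemma mem_skew_iff (f : LinearMap.BilinForm F V) (x : Module.End F V) :
    x ∈ skewAdjointLieSubalgebra f ↔ f.IsSkewAdjoint x := by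
  rw [show (x ∈ skewAdjointLieSubalgebra f) ↔ x ∈ f.skewAdjointSubmodule from Iff.rfl,
    LinearMap.mem_skewAdjointSubmodule]

lemma Msk_mem (f : LinearMap.BilinForm F V) (hsymm : f.IsSymm) (a b : V) :
    Msk f a b ∈ skewAdjointLieSubalgebra f := by
  rw [mem_skew_iff]
  intro u w
  simp only [Msk_apply, map_sub, map_smul, LinearMap.sub_apply, LinearMap.smul_apply,
    LinearMap.neg_apply, Pi.neg_apply, map_neg, smul_eq_mul]
  rw [show f u b = f b u from hsymm.eq u b, show f u a = f a u from hsymm.eq u a,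
    show f b w = f w b from hsymm.eq b w, show f a w = f w a from hsymm.eq a w]
  ring

lemma Msk_self (f : LinearMap.BilinForm F V) (a : V) : Msk f a a = 0 := by
  ext v; simp [Msk_apply]

lemma Msk_bracket (f : LinearMap.BilinForm F V) (hsymm : f.IsSymm) (a b c : V)
    (hab : f a b = 0) (hbc : f b c = 0) (hac : f a c = 0) :
    ⁅Msk f a b, Msk f b c⁆ = (-(f b b)) • Msk f a c := by
  have hba : f b a = 0 := by rw [← hsymm.eq a b]; simpa using hab
  have hcb : f c b = 0 := by rw [← hsymm.eq b c]; simpa using hbc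
  have hca : f c a = 0 := by rw [← hsymm.eq a c]; simpa using hac
  ext v
  simp only [Ring.lie_def, LinearMap.sub_apply, Module.End.mul_apply,
    Msk_apply, map_sub, map_smul, LinearMap.smul_apply, smul_eq_mul,
    hab, hbc, hac, hba, hcb, hca, zero_smul, smul_zero, sub_zero, zero_sub, smul_sub, smul_smul,
    smul_neg]
  module

end Helpers

theorem stmt9 (F : Type*) [Field F] (V : Type*) [AddCommGroup V] [Module F V]
    [FiniteDimensional F V] (hV : Module.finrank F V = 4)
    (f : LinearMap.BilinForm F V) (hsymm : f.IsSymm) (hnd : f.Nondegenerate)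
    (halt : ringChar F = 2 → ¬ f.IsAlt) :
    LieAlgebra.derivedSeries F (skewAdjointLieSubalgebra f) 1 = ⊤ ↔
      ringChar F ≠ 2 := by
  set L := skewAdjointLieSubalgebra f with hL
  have hbrk : ∀ u w : L, ⁅u, w⁆ ∈ LieAlgebra.derivedSeries F L 1 := by
    intro u w
    rw [LieAlgebra.derivedSeries_def, LieAlgebra.derivedSeriesOfIdeal_succ,
      LieAlgebra.derivedSeriesOfIdeal_zero]
    exact LieSubmodule.lie_mem_lie (LieSubmodule.mem_top _) (LieSubmodule.mem_top _)
  constructor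
  · -- derived = ⊤ → char ≠ 2
    intro h hchar
    have h2 : (2 : F) = 0 := by
      have := (ringChar.spec F 2).mpr (by rw [hchar])
      exact_mod_cast this
    have hna := halt hchar
    obtain ⟨v, hv⟩ : ∃ v, f v v ≠ 0 := by
      by_contra hc
      push_neg at hc
      exact hna hc
    have h1 : (1 : Module.End F V) ∈ skewAdjointLieSubalgebra f := by
      rw [show ∀ x : Module.End F V, (x ∈ skewAdjointLieSubalgebra f) ↔ x ∈ f.skewAdjointSubmodule from fun _ => Iff.rfl,
        LinearMap.mem_skewAdjointSubmodule]
      intro u w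
      simp only [Module.End.one_apply, LinearMap.neg_apply, Pi.neg_apply, map_neg]
      rw [eq_neg_iff_add_eq_zero, ← two_mul, h2, zero_mul]
    set e1 : L := ⟨1, h1⟩ with he1
    have he : e1 ∈ LieAlgebra.derivedSeries F L 1 := h ▸ LieSubmodule.mem_top _
    rw [LieAlgebra.derivedSeries_def, LieAlgebra.derivedSeriesOfIdeal_succ,
      LieAlgebra.derivedSeriesOfIdeal_zero] at he
    have he' : e1 ∈ Submodule.span F
        { m : L | ∃ (x : (⊤ : LieIdeal F L)) (n : (⊤ : LieIdeal F L)), ⁅(x : L), (n : L)⁆ = m } := by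
      rw [← LieSubmodule.lieIdeal_oper_eq_linear_span]
      exact he
    have key : ∀ z : L, z ∈ Submodule.span F
        { m : L | ∃ (x : (⊤ : LieIdeal F L)) (n : (⊤ : LieIdeal F L)), ⁅(x : L), (n : L)⁆ = m } →
        f ((z : Module.End F V) v) v = 0 := by
      intro z hz
      induction hz using Submodule.span_induction with
      | mem m hm =>
        obtain ⟨x, n, rfl⟩ := hm
        have hx : f.IsSkewAdjoint ((x : L) : Module.End F V) :=
          (LinearMap.mem_skewAdjointSubmodule (B := f) _).mp (x : L).2
        have hn : f.IsSkewAdjoint ((n : L) : Module.End F V) :=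
          (LinearMap.mem_skewAdjointSubmodule (B := f) _).mp (n : L).2
        set A : Module.End F V := ((x : L) : Module.End F V)
        set B : Module.End F V := ((n : L) : Module.End F V)
        have hcoe : ((⁅(x : L), (n : L)⁆ : L) : Module.End F V) = A * B - B * A := by
          rfl
        rw [hcoe]
        have h1 : f (A (B v)) v = -(f (B v) (A v)) := by
          have := hx (x := B v) (y := v)
          simpa using this
        have h2' : f (B (A v)) v = -(f (A v) (B v)) := by
          have := hn (x := A v) (y := v)
          simpa using this
        have h3 : f (A v) (B v) = f (B v) (A v) := hsymm.eq _ _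
        simp only [LinearMap.sub_apply, Module.End.mul_apply, map_sub, LinearMap.sub_apply]
        rw [h1, h2', h3]
        ring
      | zero => simp
      | add a b _ _ ha hb =>
        have : ((a + b : L) : Module.End F V) = (a : Module.End F V) + b := rfl
        rw [this]
        simp [ha, hb]
      | smul c a _ ha =>
        have : ((c • a : L) : Module.End F V) = c • (a : Module.End F V) := rfl
        rw [this]
        simp [ha]
    have := key e1 he'
    rw [he1] at this
    simp at this
    exact hv this
  · intro hchar
    have h2 : (2 : F) ≠ 0 := by
      intro h
      have hd : ringChar F ∣ 2 := ringChar.dvd (by exact_mod_cast h)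
      rcases (Nat.prime_two.eq_one_or_self_of_dvd _ hd) with h1 | h1
      · exact CharP.ringChar_ne_one h1
      · exact hchar h1
    haveI : Invertible (2 : F) := invertibleOfNonzero h2
    obtain ⟨b0, hb0⟩ := LinearMap.BilinForm.exists_orthogonal_basis (LinearMap.BilinForm.isSymm_iff.mp hsymm)
    let e : Module.Basis (Fin 4) F V := b0.reindex (finCongr hV)
    have horth : ∀ i j : Fin 4, i ≠ j → f (e i) (e j) = 0 := by
      intro i j hij
      simp only [e, Module.Basis.reindex_apply]
      exact hb0 (fun hc => hij (by simpa using congrArg (finCongr hV) hc))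
    have horth2 : f.iIsOrtho e := fun i j hij => horth i j hij
    have ha : ∀ i, f (e i) (e i) ≠ 0 := fun i h0 =>
      (LinearMap.BilinForm.iIsOrtho.not_isOrtho_basis_self_of_nondegenerate horth2 hnd i) h0
    set D := LieAlgebra.derivedSeries F L 1 with hD
    have hM : ∀ i j : Fin 4, (⟨Msk f (e i) (e j), Msk_mem f hsymm _ _⟩ : L) ∈ D := by
      intro i j
      by_cases hij : i = j
      · subst hij
        have hz : (⟨Msk f (e i) (e i), Msk_mem f hsymm _ _⟩ : L) = 0 :=
          Subtype.ext (Msk_self f (e i))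
        rw [hz]
        exact D.zero_mem
      · obtain ⟨k, hki, hkj⟩ : ∃ k : Fin 4, k ≠ i ∧ k ≠ j :=
          (show ∀ i j : Fin 4, ∃ k, k ≠ i ∧ k ≠ j by decide) i j
        have hb := Msk_bracket f hsymm (e i) (e k) (e j) (horth i k (Ne.symm hki))
          (horth k j hkj) (horth i j hij)
        have hne : (-(f (e k) (e k))) ≠ 0 := neg_ne_zero.mpr (ha k)
        have heq : (⟨Msk f (e i) (e j), Msk_mem f hsymm _ _⟩ : L)
            = (-(f (e k) (e k)))⁻¹ • ⁅(⟨Msk f (e i) (e k), Msk_mem f hsymm _ _⟩ : L),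
                (⟨Msk f (e k) (e j), Msk_mem f hsymm _ _⟩ : L)⁆ := by
          apply Subtype.ext
          show Msk f (e i) (e j)
              = (-(f (e k) (e k)))⁻¹ • ⁅Msk f (e i) (e k), Msk f (e k) (e j)⁆
          rw [hb, smul_smul, inv_mul_cancel₀ hne, one_smul]
        rw [heq]
        exact D.smul_mem _ (hbrk _ _)
    rw [eq_top_iff]
    intro x _
    have hx : f.IsSkewAdjoint (x : Module.End F V) :=
      (LinearMap.mem_skewAdjointSubmodule (B := f) _).mp x.2
    set X : Module.End F V := (x : Module.End F V) with hX
    set d : Fin 4 → Fin 4 → F :=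
      fun i j => (2 * f (e i) (e i) * f (e j) (e j))⁻¹ * f (X (e i)) (e j) with hd'
    set a : Fin 4 → F := fun i => f (e i) (e i) with ha2
    have hform : ∀ i j : Fin 4, f (e i) (e j) = if i = j then a i else 0 := by
      intro i j
      split
      · next h => rw [h]
      · next h => exact horth i j h
    have hskew2 : ∀ k l : Fin 4, f (X (e l)) (e k) = -(f (X (e k)) (e l)) := by
      intro k l
      have h1 : f (X (e l)) (e k) = -(f (e l) (X (e k))) := by
        have := hx (x := e l) (y := e k)
        simpa using this
      rw [h1, show f (e l) (X (e k)) = f (X (e k)) (e l) from hsymm.eq _ _]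
    have hdskew : ∀ k l : Fin 4, d l k = -(d k l) := by
      intro k l
      rw [hd']
      simp only
      rw [hskew2 k l]
      ring
    set Y : Module.End F V := ∑ i, ∑ j, d i j • Msk f (e i) (e j) with hY
    have hyval : ∀ k l : Fin 4, f (Y (e k)) (e l) = f (X (e k)) (e l) := by
      intro k l
      rw [hY]
      simp only [LinearMap.sum_apply, LinearMap.smul_apply, Msk_apply, map_sum, map_smul,
        map_sub, LinearMap.sub_apply, smul_eq_mul, hform, mul_sub, mul_ite, ite_mul,
        zero_mul, mul_zero, Finset.sum_sub_distrib, Finset.sum_ite_irrel, Finset.sum_const_zero,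
        Finset.sum_ite_eq', Finset.mem_univ, if_true]
      rw [hdskew k l]
      have hdkl : d k l = (2 * a k * a l)⁻¹ * f (X (e k)) (e l) := by
        rw [hd', ha2]
      rw [hdkl]
      have hak : a k ≠ 0 := ha k
      have hal : a l ≠ 0 := ha l
      field_simp
      ring
    have hXY : X = Y := by
      apply Module.Basis.ext e
      intro k
      have hw : ∀ n, f (X (e k) - Y (e k)) n = 0 := by
        have hfw : f (X (e k) - Y (e k)) = 0 := by
          apply Module.Basis.ext e
          intro l
          simp only [map_sub, LinearMap.sub_apply, LinearMap.zero_apply]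
          rw [hyval k l, sub_self]
        intro n
        rw [hfw]
        rfl
      exact sub_eq_zero.mp (hnd.1 _ hw)
    have hfin : x = ∑ i, ∑ j, d i j • (⟨Msk f (e i) (e j), Msk_mem f hsymm _ _⟩ : L) := by
      apply Subtype.ext
      have hco : ((∑ i, ∑ j, d i j • (⟨Msk f (e i) (e j), Msk_mem f hsymm _ _⟩ : L) : L) :
          Module.End F V) = ∑ i, ∑ j, d i j • Msk f (e i) (e j) := by
        simp only [AddSubmonoidClass.coe_finset_sum]
        exact Finset.sum_congr rfl fun i _ => Finset.sum_congr rfl fun j _ => rfl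
      rw [hco]
      exact hXY
    rw [hfin]
    exact sum_mem fun i _ => sum_mem fun j _ => D.smul_mem _ (hM i j)
end

section
/- Let F be a field of prime characteristic p, let s ∈ F be an element that is not a p-th power in F, and let K = F[X]/(X^p - s), which is a field extension of F. Let L be a Lie algebra over F that is absolutely simple, i.e. K' ⊗_F L is a simple Lie algebra over K' for every field extension K' of F. Then P = K ⊗_F L is a simple Lie algebra over K (and hence over F), but the base change K ⊗_F P is not a semisimple Lie algebra over K; indeed its solvable radical is nonzero. -/
open scoped TensorProduct

universe u v

theorem aux_isSimple_restrictScalars (F : Type*) [Field F] (K : Type*) [Field K] [Algebra F K]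
    (N : Type*) [LieRing N] [LieAlgebra K N] [hN : LieAlgebra.IsSimple K N] :
    LieAlgebra.IsSimple F (RestrictScalars F K N) := by
  set e := RestrictScalars.addEquiv F K N with he
  have ebrk : ∀ x y : RestrictScalars F K N, e ⁅x, y⁆ = ⁅e x, e y⁆ := fun _ _ => rfl
  constructor
  · intro I
    by_cases hI : I = ⊥
    · left; exact hI
    right
    set S : Set N := {z | ∃ x : N, ∃ y, y ∈ I ∧ ⁅x, e y⁆ = z} with hS
    have hlie : ∀ (x m : N), m ∈ Submodule.span K S → ⁅x, m⁆ ∈ Submodule.span K S := by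
      intro x m hm
      induction hm using Submodule.span_induction with
      | mem z hz =>
        obtain ⟨a, y, hy, rfl⟩ := hz
        rw [leibniz_lie x a (e y)]
        refine Submodule.add_mem _ (Submodule.subset_span ?_) (Submodule.subset_span ?_)
        · exact ⟨⁅x, a⁆, y, hy, rfl⟩
        · refine ⟨a, ⁅e.symm x, y⁆, I.lie_mem hy, ?_⟩
          rw [ebrk]; simp
      | zero => simp
      | add u v _ _ hu hv => rw [lie_add]; exact Submodule.add_mem _ hu hv
      | smul c u _ hu => rw [lie_smul]; exact Submodule.smul_mem _ _ hu
    set J : LieIdeal K N := { Submodule.span K S with lie_mem := fun {x m} hm => hlie x m hm }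
      with hJ
    have hJI : ∀ z : N, z ∈ Submodule.span K S → ∀ k : K, e.symm (k • z) ∈ I := by
      intro z hz
      induction hz using Submodule.span_induction with
      | mem z hz =>
        intro k
        obtain ⟨a, y, hy, rfl⟩ := hz
        have h1 : k • (⁅a, e y⁆ : N) = ⁅k • a, e y⁆ := (smul_lie k a (e y)).symm
        rw [h1]
        have h2 : e.symm ⁅k • a, e y⁆ = ⁅e.symm (k • a), y⁆ := rfl
        rw [h2]
        exact I.lie_mem hy
      | zero => intro k; rw [smul_zero]; simpa using I.zero_mem
      | add u v _ _ hu hv =>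
        intro k; rw [smul_add, map_add]; exact I.add_mem (hu k) (hv k)
      | smul c u _ hu => intro k; rw [smul_smul]; exact hu (k * c)
    rcases hN.eq_bot_or_eq_top J with hbot | htop
    · exfalso
      apply hI
      rw [LieSubmodule.eq_bot_iff] at hbot ⊢
      intro y hy
      have hyc : ∀ x : N, ⁅x, e y⁆ = 0 := by
        intro x
        exact hbot _ (Submodule.subset_span ⟨x, y, hy, rfl⟩)
      have : e y ∈ LieAlgebra.center K N := (LieModule.mem_maxTrivSubmodule K N N (e y)).mpr hyc
      rw [LieAlgebra.center_eq_bot K N, LieSubmodule.mem_bot] at this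
      exact e.injective (by simpa using this)
    · ext m
      simp only [LieSubmodule.mem_top, iff_true]
      have hm : e m ∈ Submodule.span K S := by
        have : (e m : N) ∈ J := htop ▸ LieSubmodule.mem_top (e m)
        exact this
      have := hJI (e m) hm 1
      simpa using this
  · intro habl
    apply hN.non_abelian
    exact ⟨fun x y => habl.trivial (e.symm x) (e.symm y)⟩

section

local instance instAddCommMonoidRestrictScalarsLie (F K N : Type*) [LieRing N] :
    AddCommMonoid (RestrictScalars F K N) :=
  (LieRing.toAddCommGroup : AddCommGroup (RestrictScalars F K N)).toAddCommMonoid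

local instance instModuleRestrictScalarsLie (F K N : Type*) [Field F] [Field K] [Algebra F K]
    [LieRing N] [LieAlgebra K N] : Module F (RestrictScalars F K N) :=
  LieAlgebra.toModule

set_option maxHeartbeats 2000000 in
theorem aux_radical_ne_bot (F : Type*) [Field F] (K : Type*) [Field K] [Algebra F K]
    (p : ℕ) (hp : p.Prime) [CharP F p] (s : F) (t : K) (ht : t ^ p = algebraMap F K s)
    (htn : ∀ c : F, algebraMap F K c ≠ t)
    (N : Type*) [LieRing N] [LieAlgebra K N] [Nontrivial N] :
    LieAlgebra.radical K (@TensorProduct F _ K (RestrictScalars F K N) _ _ _ LieAlgebra.toModule) ≠ ⊥ := by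
  haveI : Fact p.Prime := ⟨hp⟩
  set M := RestrictScalars F K N with hM
  set e := RestrictScalars.addEquiv F K N with he
  have esmul : ∀ (f : F) (m : M), e (f • m) = algebraMap F K f • e m := fun _ _ => rfl
  -- the F-linear operator "multiplication by t" on M
  set τ : M →ₗ[F] M :=
    { toFun := fun m => e.symm (t • e m)
      map_add' := fun m n => by simp [smul_add]
      map_smul' := fun f m => by
        apply e.injective
        show e (e.symm (t • e (f • m))) = algebraMap F K f • e (e.symm (t • e m))
        rw [e.apply_symm_apply, e.apply_symm_apply, esmul, smul_comm] } with hτ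
  have hτ_apply : ∀ m : M, τ m = e.symm (t • e m) := fun m => rfl
  -- bracket compatibility of τ
  have hτ_lie_right : ∀ m n : M, ⁅m, τ n⁆ = τ ⁅m, n⁆ := by
    intro m n
    apply e.injective
    show ⁅e m, e (τ n)⁆ = e (τ ⁅m, n⁆)
    rw [hτ_apply, hτ_apply]
    simp [lie_smul]
    rfl
  have hτ_lie_left : ∀ m n : M, ⁅τ m, n⁆ = τ ⁅m, n⁆ := by
    intro m n
    apply e.injective
    show ⁅e (τ m), e n⁆ = e (τ ⁅m, n⁆)
    rw [hτ_apply, hτ_apply]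
    simp [smul_lie]
    rfl
  set P := K ⊗[F] M with hP
  set D : P →ₗ[K] P := t • LinearMap.id - LinearMap.baseChange K τ with hD
  have hDtmul : ∀ (b : K) (n : M), D (b ⊗ₜ[F] n) = (t * b) ⊗ₜ[F] n - b ⊗ₜ[F] (τ n) := by
    intro b n
    rw [hD]
    rw [LinearMap.sub_apply, LinearMap.smul_apply, LinearMap.id_apply,
      LinearMap.baseChange_tmul, TensorProduct.smul_tmul']
    rfl
  have bsub : ∀ x u v : P, ⁅x, u - v⁆ = ⁅x, u⁆ - ⁅x, v⁆ := fun x u v => lie_sub x u v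
  have bsubl : ∀ x u v : P, ⁅u - v, x⁆ = ⁅u, x⁆ - ⁅v, x⁆ := fun x u v => sub_lie u v x
  have badd : ∀ x u v : P, ⁅x, u + v⁆ = ⁅x, u⁆ + ⁅x, v⁆ := fun x u v => lie_add x u v
  have baddl : ∀ x u v : P, ⁅u + v, x⁆ = ⁅u, x⁆ + ⁅v, x⁆ := fun x u v => add_lie u v x
  have bzero : ∀ x : P, ⁅x, (0 : P)⁆ = 0 := fun x => lie_zero x
  have bzerol : ∀ x : P, ⁅(0 : P), x⁆ = 0 := fun x => zero_lie x
  have bsmul : ∀ (c : K) (x u : P), ⁅x, c • u⁆ = c • ⁅x, u⁆ := fun c x u => lie_smul c x u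
  have bsmull : ∀ (c : K) (x u : P), ⁅c • x, u⁆ = c • ⁅x, u⁆ := fun c x u => smul_lie c x u
  -- D is in the centroid
  have lem1 : ∀ x u : P, ⁅x, D u⁆ = D ⁅x, u⁆ := by
    intro x u
    induction u using TensorProduct.induction_on with
    | zero => simp only [map_zero, bzero]
    | tmul b n =>
      induction x using TensorProduct.induction_on with
      | zero => simp only [bzerol, map_zero]
      | tmul a m =>
        rw [hDtmul, bsub, LieAlgebra.ExtendScalars.bracket_tmul,
          LieAlgebra.ExtendScalars.bracket_tmul, LieAlgebra.ExtendScalars.bracket_tmul,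
          hτ_lie_right, hDtmul, mul_left_comm a t b]
      | add x₁ x₂ h₁ h₂ => rw [baddl, baddl, h₁, h₂, map_add]
    | add u₁ u₂ h₁ h₂ => rw [map_add, badd, badd, h₁, h₂, map_add]
  have lem2 : ∀ x u : P, ⁅D x, u⁆ = D ⁅x, u⁆ := by
    intro x u
    induction u using TensorProduct.induction_on with
    | zero => simp only [bzero, map_zero]
    | tmul b n =>
      induction x using TensorProduct.induction_on with
      | zero => simp only [map_zero, bzerol]
      | tmul a m =>
        rw [hDtmul, bsubl, LieAlgebra.ExtendScalars.bracket_tmul,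
          LieAlgebra.ExtendScalars.bracket_tmul, LieAlgebra.ExtendScalars.bracket_tmul,
          hτ_lie_left, hDtmul, mul_assoc t a b]
      | add x₁ x₂ h₁ h₂ => rw [map_add, baddl, baddl, h₁, h₂, map_add]
    | add u₁ u₂ h₁ h₂ => rw [badd, badd, h₁, h₂, map_add]
  have lem1k : ∀ (k : ℕ) (x u : P), ⁅x, (D ^ k) u⁆ = (D ^ k) ⁅x, u⁆ := by
    intro k
    induction k with
    | zero => intro x u; simp
    | succ k ih =>
      intro x u
      rw [pow_succ', Module.End.mul_apply, Module.End.mul_apply, lem1, ih]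
  have lem2k : ∀ (k : ℕ) (x u : P), ⁅(D ^ k) x, u⁆ = (D ^ k) ⁅x, u⁆ := by
    intro k
    induction k with
    | zero => intro x u; simp
    | succ k ih =>
      intro k x
      rw [pow_succ', Module.End.mul_apply, Module.End.mul_apply, lem2, ih]
  -- a nonzero element of M
  haveI : Nontrivial M := e.toEquiv.nontrivial
  obtain ⟨m₀, hm₀⟩ := exists_ne (0 : M)
  -- a linear functional on K killing 1 and sending t to 1
  have h1t : (1 : K) ≠ t := fun h => htn 1 (by rw [map_one]; exact h)
  have hli : LinearIndepOn F id (insert t {(1 : K)} : Set K) := by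
    rw [linearIndepOn_id_insert (by simpa using h1t.symm)]
    constructor
    · exact (linearIndepOn_singleton_iff F).mpr one_ne_zero
    · intro hmem
      obtain ⟨a, ha⟩ := Submodule.mem_span_singleton.mp hmem
      exact htn a (by rw [← ha, Algebra.smul_def, mul_one])
  set B := Module.Basis.extend hli with hB
  have htB : t ∈ hli.extend (Set.subset_univ _) :=
    hli.subset_extend _ (Set.mem_insert t _)
  have h1B : (1 : K) ∈ hli.extend (Set.subset_univ _) :=
    hli.subset_extend _ (Set.mem_insert_of_mem _ rfl)
  set f : K →ₗ[F] F := B.coord ⟨t, htB⟩ with hf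
  have hreprt : B.repr t = Finsupp.single ⟨t, htB⟩ 1 := by
    have h3 := B.repr_self ⟨t, htB⟩
    rwa [Module.Basis.extend_apply_self] at h3
  have hrepr1 : B.repr 1 = Finsupp.single ⟨(1 : K), h1B⟩ 1 := by
    have h3 := B.repr_self ⟨(1 : K), h1B⟩
    rwa [Module.Basis.extend_apply_self] at h3
  have hft : f t = 1 := by
    rw [hf, Module.Basis.coord_apply, hreprt, Finsupp.single_eq_same]
  have hf1 : f 1 = 0 := by
    rw [hf, Module.Basis.coord_apply, hrepr1,
      Finsupp.single_eq_of_ne (fun hc => h1t (congrArg Subtype.val hc).symm)]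
  set g : P →ₗ[F] M := (TensorProduct.lid F M).toLinearMap ∘ₗ LinearMap.rTensor M f with hg
  have hg_tmul : ∀ (a : K) (m : M), g (a ⊗ₜ[F] m) = f a • m := by
    intro a m
    rw [hg]
    rw [LinearMap.coe_comp, Function.comp_apply, LinearMap.rTensor_tmul,
      LinearEquiv.coe_coe, TensorProduct.lid_tmul]
  set z : P := D ((1 : K) ⊗ₜ[F] m₀) with hz_def
  have hz : z ≠ 0 := by
    intro h0
    have hgz : g z = m₀ := by
      rw [hz_def, hDtmul, map_sub, hg_tmul, hg_tmul, mul_one, hft, hf1, one_smul, zero_smul,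
        sub_zero]
    rw [h0, map_zero] at hgz
    exact hm₀ hgz.symm
  haveI : Nontrivial P := nontrivial_of_ne z 0 hz
  haveI : CharP K p := charP_of_injective_algebraMap (algebraMap F K).injective p
  have halg_inj : Function.Injective (algebraMap K (Module.End K P)) := by
    intro c c' hcc
    have h1 := LinearMap.congr_fun hcc z
    rw [Module.algebraMap_end_apply, Module.algebraMap_end_apply] at h1
    by_contra hne
    have h2 : (c - c') • z = 0 := by rw [sub_smul, h1, sub_self]
    have h3 : (c - c')⁻¹ • ((c - c') • z) = 0 := by rw [h2, smul_zero]
    rw [smul_smul, inv_mul_cancel₀ (sub_ne_zero.mpr hne), one_smul] at h3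
    exact hz h3
  haveI : CharP (Module.End K P) p := charP_of_injective_algebraMap halg_inj p
  -- powers of τ and D
  have esmul' : ∀ (c : F) (m : M), c • m = e.symm (algebraMap F K c • e m) := fun _ _ => rfl
  have hτpow : ∀ (k : ℕ) (m : M), (τ ^ k) m = e.symm (t ^ k • e m) := by
    intro k
    induction k with
    | zero => intro m; rw [pow_zero, pow_zero, one_smul, Module.End.one_apply, e.symm_apply_apply]
    | succ k ih =>
      intro m
      rw [pow_succ', Module.End.mul_apply, ih, hτ_apply, e.apply_symm_apply, smul_smul, ← pow_succ']
  have hYpow : ∀ k : ℕ, (LinearMap.baseChange K τ) ^ k = LinearMap.baseChange K (τ ^ k) := by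
    intro k
    induction k with
    | zero => rw [pow_zero, pow_zero, LinearMap.baseChange_one]
    | succ k ih =>
      rw [pow_succ, pow_succ, ih, Module.End.mul_eq_comp, Module.End.mul_eq_comp,
        LinearMap.baseChange_comp]
  have hDXY : D = algebraMap K (Module.End K P) t - LinearMap.baseChange K τ := by
    rw [hD, Module.algebraMap_end_eq_smul_id]
  have hcomm : Commute (algebraMap K (Module.End K P) t) (LinearMap.baseChange K τ) :=
    Algebra.commutes t _
  have hDp : D ^ p = 0 := by
    rw [hDXY, sub_pow_char_of_commute _ hcomm, ← map_pow, ht, hYpow, sub_eq_zero]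
    refine LinearMap.ext fun u => ?_
    induction u using TensorProduct.induction_on with
    | zero => rw [map_zero, map_zero]
    | tmul a m =>
      rw [Module.algebraMap_end_apply, LinearMap.baseChange_tmul, hτpow, ht, ← esmul',
        TensorProduct.tmul_smul, algebraMap_smul]
    | add u₁ u₂ h₁ h₂ => rw [map_add, map_add, h₁, h₂]
  -- the ideals range (D ^ k)
  have hrange_lie : ∀ (k : ℕ) (x m : P), m ∈ LinearMap.range (D ^ k) →
      ⁅x, m⁆ ∈ LinearMap.range (D ^ k) := by
    rintro k x m ⟨u, rfl⟩
    exact ⟨⁅x, u⁆, (lem1k k x u).symm⟩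
  set Jk : ℕ → LieIdeal K P := fun k =>
    { LinearMap.range (D ^ k) with
      lie_mem := fun {x m} hm => hrange_lie k x m hm } with hJk
  have hmem : ∀ (k : ℕ) (m : P), m ∈ Jk k ↔ m ∈ LinearMap.range (D ^ k) := fun _ _ => Iff.rfl
  have hbrk : ∀ a b : ℕ, (⁅Jk a, Jk b⁆ : LieIdeal K P) ≤ Jk (a + b) := by
    intro a b
    rw [LieSubmodule.lie_le_iff]
    intro x hx m hm
    obtain ⟨u, rfl⟩ := (hmem a x).mp hx
    obtain ⟨v, rfl⟩ := (hmem b m).mp hm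
    refine (hmem _ _).mpr ⟨⁅u, v⁆, ?_⟩
    rw [lem2k a, lem1k b, pow_add, Module.End.mul_apply]
  have hds : ∀ n : ℕ, LieAlgebra.derivedSeriesOfIdeal K P n (Jk 1) ≤ Jk (2 ^ n) := by
    intro n
    induction n with
    | zero => rw [LieAlgebra.derivedSeriesOfIdeal_zero, pow_zero]
    | succ n ih =>
      rw [LieAlgebra.derivedSeriesOfIdeal_succ]
      refine le_trans (LieSubmodule.mono_lie ih ih) (le_trans (hbrk _ _) ?_)
      rw [← Nat.two_pow_succ]
  have hDP0 : D ^ (2 ^ p) = 0 := by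
    rw [← Nat.sub_add_cancel (Nat.lt_two_pow_self (n := p)).le, pow_add, hDp, mul_zero]
  have hJtop0 : Jk (2 ^ p) = ⊥ := by
    rw [LieSubmodule.eq_bot_iff]
    intro m hm
    obtain ⟨u, hu⟩ := (hmem _ m).mp hm
    rw [hDP0, LinearMap.zero_apply] at hu
    exact hu.symm
  have hsolv : LieAlgebra.IsSolvable (Jk 1) := by
    refine (LieAlgebra.isSolvable_iff K _).mpr ⟨p, ?_⟩
    rw [LieIdeal.derivedSeries_eq_bot_iff]
    exact le_bot_iff.mp (hJtop0 ▸ hds p)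
  have hJ1ne : Jk 1 ≠ ⊥ := by
    intro hb
    have hzmem : z ∈ Jk 1 := (hmem 1 z).mpr ⟨(1 : K) ⊗ₜ[F] m₀, by rw [pow_one, hz_def]⟩
    rw [hb, LieSubmodule.mem_bot] at hzmem
    exact hz hzmem
  intro hrad
  have hle : Jk 1 ≤ LieAlgebra.radical K P := le_sSup hsolv
  rw [hrad] at hle
  exact hJ1ne (le_bot_iff.mp hle)

end

theorem stmt11 (F : Type u) [Field F] (p : ℕ) (hp : p.Prime) [CharP F p]
    (s : F) (hs : ¬ ∃ y : F, y ^ p = s)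
    -- `K` is the field extension `F[X]/(X^p - s)` of `F`: it is generated over `F` by an
    -- element `t` satisfying `t^p = s`
    (K : Type u) [Field K] [Algebra F K] (t : K) (ht : t ^ p = algebraMap F K s)
    (hgen : Algebra.adjoin F ({t} : Set K) = ⊤)
    (L : Type v) [LieRing L] [LieAlgebra F L]
    (habs : ∀ (K' : Type u) [Field K'] [Algebra F K'],
      LieAlgebra.IsSimple K' (K' ⊗[F] L)) :
    LieAlgebra.IsSimple K (K ⊗[F] L) ∧
    LieAlgebra.IsSimple F (RestrictScalars F K (K ⊗[F] L)) ∧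
    ¬ LieAlgebra.HasTrivialRadical K (@TensorProduct F _ K (RestrictScalars F K (K ⊗[F] L)) _ _ _ LieAlgebra.toModule) ∧
    LieAlgebra.radical K (@TensorProduct F _ K (RestrictScalars F K (K ⊗[F] L)) _ _ _ LieAlgebra.toModule) ≠ ⊥ := by
  haveI hsimple : LieAlgebra.IsSimple K (K ⊗[F] L) := habs K
  haveI : Nontrivial (K ⊗[F] L) := by
    by_contra h
    rw [not_nontrivial_iff_subsingleton] at h
    exact hsimple.non_abelian ⟨fun x y => Subsingleton.elim _ _⟩
  have htn : ∀ c : F, algebraMap F K c ≠ t := by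
    intro c hc
    refine hs ⟨c, (algebraMap F K).injective ?_⟩
    rw [map_pow, hc, ht]
  have hrad : LieAlgebra.radical K (@TensorProduct F _ K (RestrictScalars F K (K ⊗[F] L)) _ _ _ LieAlgebra.toModule) ≠ ⊥ :=
    aux_radical_ne_bot F K p hp s t ht htn (K ⊗[F] L)
  refine ⟨hsimple, aux_isSimple_restrictScalars F K (K ⊗[F] L), fun h => hrad h.radical_eq_bot,
    hrad⟩
end
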